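/- For the wetting flow v = -ξ₀⁻¹γ(κ - (θ₀+θ_L)/L)n, v₀ = -ξ₁⁻¹γ(cosθ₀-cosθ_Y), v_L = ξ₁⁻¹γ(cosθ_L-cosθ_Y), the energy rate Ė = γ[∫κ v_n + v₀(cosθ₀-cosθ_Y) - v_L(cosθ_L-cosθ_Y)] equals -γ²[ξ₀⁻¹∫(κ-(θ₀+θ_L)/L)² + ξ₁⁻¹(cosθ₀-cosθ_Y)² + ξ₁⁻¹(cosθ_L-cosθ_Y)²] ≤ 0. -/

import Mathlib

open MeasureTheory Real

theorem stmt16 {Γ : Type*} [MeasurableSpace Γ] (μ : Measure Γ) (L : ℝ) (hL : 0 < L)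
    (hμ : μ Set.univ = ENNReal.ofReal L)
    (κ : Γ → ℝ) (hκ : MemLp κ 2 μ)
    (θ₀ θL θY γ ξ₀ ξ₁ : ℝ) (hγ : 0 < γ) (hξ₀ : 0 < ξ₀) (hξ₁ : 0 < ξ₁)
    (hGB : ∫ x, κ x ∂μ = θ₀ + θL)
    (vn : Γ → ℝ) (hvn : ∀ x, vn x = -(ξ₀⁻¹ * γ * (κ x - (θ₀ + θL) / L)))
    (v₀ vL : ℝ)
    (hv₀ : v₀ = -(ξ₁⁻¹ * γ * (cos θ₀ - cos θY)))
    (hvL : vL = ξ₁⁻¹ * γ * (cos θL - cos θY)) :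
    γ * ((∫ x, κ x * vn x ∂μ) + v₀ * (cos θ₀ - cos θY) - vL * (cos θL - cos θY)) =
        -(γ ^ 2 * (ξ₀⁻¹ * (∫ x, (κ x - (θ₀ + θL) / L) ^ 2 ∂μ) +
          ξ₁⁻¹ * (cos θ₀ - cos θY) ^ 2 + ξ₁⁻¹ * (cos θL - cos θY) ^ 2)) ∧
      γ * ((∫ x, κ x * vn x ∂μ) + v₀ * (cos θ₀ - cos θY) - vL * (cos θL - cos θY)) ≤ 0 := by
  set c : ℝ := (θ₀ + θL) / L with hc
  haveI : IsFiniteMeasure μ := ⟨by rw [hμ]; exact ENNReal.ofReal_lt_top⟩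
  have hκint : Integrable κ μ := hκ.integrable one_le_two
  have hκc : MemLp (fun x => κ x - c) 2 μ := hκ.sub (memLp_const c)
  have hsq : Integrable (fun x => (κ x - c) ^ 2) μ := by
    simpa [sq] using hκc.integrable_sq
  have hcκ : Integrable (fun x => c * (κ x - c)) μ :=
    ((hκint.sub (integrable_const c)).const_mul c)
  have hconst : ∫ _ : Γ, c ∂μ = c * L := by
    rw [integral_const, measureReal_def, hμ, ENNReal.toReal_ofReal hL.le, smul_eq_mul, mul_comm]
  have hzero : ∫ x, c * (κ x - c) ∂μ = 0 := by
    rw [integral_const_mul, integral_sub hκint (integrable_const c), hGB, hconst,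
      hc, div_mul_cancel₀ _ hL.ne']
    ring
  have key : ∫ x, κ x * vn x ∂μ = -(ξ₀⁻¹ * γ) * ∫ x, (κ x - c) ^ 2 ∂μ := by
    have : ∀ x, κ x * vn x = -(ξ₀⁻¹ * γ) * ((κ x - c) ^ 2 + c * (κ x - c)) := by
      intro x; rw [hvn x]; ring
    simp_rw [this]
    rw [integral_const_mul, integral_add hsq hcκ, hzero, add_zero]
  have hsqnn : 0 ≤ ∫ x, (κ x - c) ^ 2 ∂μ :=
    integral_nonneg fun x => sq_nonneg _
  have heq : γ * ((∫ x, κ x * vn x ∂μ) + v₀ * (cos θ₀ - cos θY) - vL * (cos θL - cos θY)) =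
      -(γ ^ 2 * (ξ₀⁻¹ * (∫ x, (κ x - c) ^ 2 ∂μ) +
        ξ₁⁻¹ * (cos θ₀ - cos θY) ^ 2 + ξ₁⁻¹ * (cos θL - cos θY) ^ 2)) := by
    rw [key, hv₀, hvL]; ring
  refine ⟨heq, ?_⟩
  rw [heq]
  have h1 : 0 ≤ γ ^ 2 * (ξ₀⁻¹ * (∫ x, (κ x - c) ^ 2 ∂μ) +
      ξ₁⁻¹ * (cos θ₀ - cos θY) ^ 2 + ξ₁⁻¹ * (cos θL - cos θY) ^ 2) := by positivity
  linarith
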